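/- Let M ⊆ ℕ and n ∈ ℕ, let C = C(n,M) (a finite set) with k = #C, and put a = ⌊k/2⌋. Let S = {x + u : x, u ∈ C, x ≠ u, x + u ≠ n, 2x ≠ n, 2u ≠ n} be the set of generators of children of the parent CoP C(n,M). Then #S ≤ 2a(a−1), and if k ≥ 4 then #S ≥ 4(a−1). -/
import Mathlib

/-- The circle of partition generated by `n` with base set `M`. -/
def CoP (n : ℕ) (M : Set ℕ) : Set ℕ :=
  {x | 0 < x ∧ x < n ∧ x ∈ M ∧ n - x ∈ M}

lemma cop_finite (n : ℕ) (M : Set ℕ) : (CoP n M).Finite :=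
  (Set.finite_Icc 0 n).subset fun x hx => Set.mem_Icc.2 ⟨Nat.zero_le _, hx.2.1.le⟩

lemma cop_symm {n : ℕ} {M : Set ℕ} {x : ℕ} (hx : x ∈ CoP n M) : n - x ∈ CoP n M := by
  obtain ⟨h1, h2, h3, h4⟩ := hx
  refine ⟨by omega, by omega, h4, ?_⟩
  have h : n - (n - x) = x := by omega
  rwa [h]

/-- Bounds on the number of children of a parent CoP `C(n,M)` with `k` points:
the set `S` of generators of children (sums `x + u` of weights of two points on
distinct real axes, neither being the center) satisfies `#S ≤ 2a(a-1)` where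
`a = ⌊k/2⌋`, and `#S ≥ 4(a-1)` provided `k ≥ 4`. -/
theorem stmt_15 (M : Set ℕ) (n : ℕ) :
    {s : ℕ | ∃ x ∈ CoP n M, ∃ u ∈ CoP n M,
        x ≠ u ∧ x + u ≠ n ∧ 2 * x ≠ n ∧ 2 * u ≠ n ∧ s = x + u}.ncard ≤
      2 * ((CoP n M).ncard / 2) * ((CoP n M).ncard / 2 - 1) ∧
    (4 ≤ (CoP n M).ncard →
      4 * ((CoP n M).ncard / 2 - 1) ≤
        {s : ℕ | ∃ x ∈ CoP n M, ∃ u ∈ CoP n M,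
          x ≠ u ∧ x + u ≠ n ∧ 2 * x ≠ n ∧ 2 * u ≠ n ∧ s = x + u}.ncard) := by
  classical
  have hfin := cop_finite n M
  set S : Set ℕ := {s : ℕ | ∃ x ∈ CoP n M, ∃ u ∈ CoP n M,
      x ≠ u ∧ x + u ≠ n ∧ 2 * x ≠ n ∧ 2 * u ≠ n ∧ s = x + u} with hS
  set F : Finset ℕ := hfin.toFinset with hF
  have hmemF : ∀ x, x ∈ F ↔ x ∈ CoP n M := fun x => hfin.mem_toFinset
  have hkcard : (CoP n M).ncard = F.card := Set.ncard_eq_toFinset_card _ hfin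
  set N : Finset ℕ := F.filter (fun x => 2 * x ≠ n) with hNdef
  have hmemN : ∀ x, x ∈ N ↔ (x ∈ CoP n M ∧ 2 * x ≠ n) := by
    intro x; simp [hNdef, hmemF]
  have hNlt : ∀ x ∈ N, 0 < x ∧ x < n := by
    intro x hx
    obtain ⟨hx1, _⟩ := (hmemN x).1 hx
    exact ⟨hx1.1, hx1.2.1⟩
  have hsymmN : ∀ x ∈ N, n - x ∈ N := by
    intro x hx
    obtain ⟨hx1, hx2⟩ := (hmemN x).1 hx
    have hlt := hx1.2.1
    exact (hmemN _).2 ⟨cop_symm hx1, by omega⟩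
  -- split into low and high half
  set Lo : Finset ℕ := N.filter (fun x => 2 * x < n) with hLo
  set Hi : Finset ℕ := N.filter (fun x => n < 2 * x) with hHi
  set b : ℕ := Lo.card with hb
  have hHiLo : Hi.card = Lo.card := by
    apply Finset.card_bij' (fun x _ => n - x) (fun x _ => n - x)
    · intro x hx
      simp only [hHi, Finset.mem_filter] at hx
      obtain ⟨hxN, hxgt⟩ := hx
      have := hNlt x hxN
      simp only [hLo, Finset.mem_filter]
      exact ⟨hsymmN x hxN, by omega⟩
    · intro x hx
      simp only [hLo, Finset.mem_filter] at hx
      obtain ⟨hxN, hxlt⟩ := hx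
      have := hNlt x hxN
      simp only [hHi, Finset.mem_filter]
      exact ⟨hsymmN x hxN, by omega⟩
    · intro x hx
      simp only [hHi, Finset.mem_filter] at hx
      have := hNlt x hx.1
      omega
    · intro x hx
      simp only [hLo, Finset.mem_filter] at hx
      have := hNlt x hx.1
      omega
  have hNcard : N.card = 2 * b := by
    have hdisj : Disjoint Lo Hi := by
      rw [Finset.disjoint_left]
      intro x hx hx'
      simp only [hLo, hHi, Finset.mem_filter] at hx hx'
      omega
    have hunion : Lo ∪ Hi = N := by
      ext x
      simp only [hLo, hHi, Finset.mem_union, Finset.mem_filter]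
      constructor
      · rintro (h | h) <;> exact h.1
      · intro h
        have h2 : 2 * x ≠ n := ((hmemN x).1 h).2
        rcases Nat.lt_or_ge (2*x) n with hlt | hge
        · exact Or.inl ⟨h, hlt⟩
        · exact Or.inr ⟨h, by omega⟩
    have := Finset.card_union_of_disjoint hdisj
    rw [hunion] at this
    omega
  -- the number of center points is at most 1
  have hkN : F.card = N.card + (F.filter (fun x => ¬ 2 * x ≠ n)).card := by
    rw [hNdef]
    exact (Finset.card_filter_add_card_filter_not _).symm
  have hcenter : (F.filter (fun x => ¬ 2 * x ≠ n)).card ≤ 1 := by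
    apply Finset.card_le_one.2
    intro x hx y hy
    simp only [Finset.mem_filter, not_not] at hx hy
    omega
  have hab : F.card / 2 = b := by omega
  -- the finset of ordered pairs with x < u witnessing children sums
  set T : Finset (ℕ × ℕ) :=
    (N ×ˢ N).filter (fun p => p.1 < p.2 ∧ p.1 + p.2 ≠ n) with hT
  have hmemT : ∀ p : ℕ × ℕ, p ∈ T ↔ (p.1 ∈ N ∧ p.2 ∈ N ∧ p.1 < p.2 ∧ p.1 + p.2 ≠ n) := by
    intro p
    simp only [hT, Finset.mem_filter, Finset.mem_product]
    tauto
  -- subset of image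
  have hSsub : S ⊆ ↑(T.image (fun p : ℕ × ℕ => p.1 + p.2)) := by
    intro s hs
    obtain ⟨x, hx, u, hu, hxu, hsn, hxc, huc, rfl⟩ := hs
    have hxN : x ∈ N := (hmemN x).2 ⟨hx, hxc⟩
    have huN : u ∈ N := (hmemN u).2 ⟨hu, huc⟩
    simp only [Finset.coe_image, Set.mem_image, Finset.mem_coe]
    rcases lt_or_gt_of_ne hxu with h | h
    · exact ⟨(x, u), (hmemT _).2 ⟨hxN, huN, h, hsn⟩, rfl⟩
    · exact ⟨(u, x), (hmemT _).2 ⟨huN, hxN, h, by omega⟩, by simp [Nat.add_comm]⟩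
  have hSfin : S.Finite := Set.Finite.subset (Finset.finite_toSet _) hSsub
  -- counting T
  set E : Finset (ℕ × ℕ) := N.offDiag.filter (fun p => p.1 + p.2 = n) with hE
  have hEcard : E.card = N.card := by
    apply Finset.card_bij' (fun p _ => p.1) (fun x _ => (x, n - x))
    · intro p hp
      simp only [hE, Finset.mem_filter, Finset.mem_offDiag] at hp
      exact hp.1.1
    · intro x hx
      have hx' := hNlt x hx
      have h2 : 2 * x ≠ n := ((hmemN x).1 hx).2
      simp only [hE, Finset.mem_filter, Finset.mem_offDiag]
      refine ⟨⟨hx, hsymmN x hx, ?_⟩, by omega⟩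
      simp only [ne_eq]
      omega
    · intro p hp
      simp only [hE, Finset.mem_filter, Finset.mem_offDiag] at hp
      have := hNlt p.1 hp.1.1
      have hps : p.1 + p.2 = n := hp.2
      have : p.2 = n - p.1 := by omega
      exact Prod.ext rfl this.symm
    · intro x hx; rfl
  have hEsub : E ⊆ N.offDiag := Finset.filter_subset _ _
  have hTord : N.offDiag \ E = T ∪ T.image Prod.swap := by
    ext ⟨x, u⟩
    simp only [Finset.mem_sdiff, Finset.mem_offDiag, hE, Finset.mem_filter,
      Finset.mem_union, Finset.mem_image, hmemT, Prod.ext_iff, Prod.swap]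
    constructor
    · rintro ⟨⟨hx, hu, hne⟩, hns⟩
      have hns' : x + u ≠ n := fun h => hns ⟨⟨hx, hu, hne⟩, h⟩
      rcases lt_or_gt_of_ne hne with h | h
      · exact Or.inl ⟨hx, hu, h, hns'⟩
      · exact Or.inr ⟨(u, x), ⟨hu, hx, h, by omega⟩, rfl, rfl⟩
    · rintro (⟨hx, hu, hlt, hns⟩ | ⟨⟨p, q⟩, ⟨hp, hq, hlt, hns⟩, h1, h2⟩)
      · exact ⟨⟨hx, hu, hlt.ne⟩, fun h => hns h.2⟩
      · subst h1; subst h2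
        exact ⟨⟨hq, hp, hlt.ne'⟩, fun h => hns (by omega)⟩
  have hTdisj : Disjoint T (T.image Prod.swap) := by
    rw [Finset.disjoint_left]
    rintro ⟨x, u⟩ h1 h2
    simp only [Finset.mem_image, hmemT, Prod.ext_iff, Prod.swap] at h1 h2
    obtain ⟨⟨p, q⟩, ⟨_, _, hlt, _⟩, hq, hp⟩ := h2
    simp only at hq hp
    omega
  have hTswap : (T.image Prod.swap).card = T.card :=
    Finset.card_image_of_injective _ Prod.swap_injective
  have hTcard2 : T.card + T.card = (N.offDiag).card - E.card := by
    rw [← Finset.card_sdiff_of_subset hEsub, hTord,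
      Finset.card_union_of_disjoint hTdisj, hTswap]
  have hoff : (N.offDiag).card = N.card * N.card - N.card := Finset.offDiag_card _
  have hkey : N.card * N.card = N.card + N.card + 2 * (2 * b * (b - 1)) := by
    rw [hNcard]
    rcases b with _ | b'
    · simp
    · have h1 : b' + 1 - 1 = b' := rfl
      rw [h1]
      ring
  have hTcard : T.card = 2 * b * (b - 1) := by
    set mm := N.card * N.card with hmm
    set P := 2 * b * (b - 1) with hP
    omega
  -- upper bound
  have hupper : S.ncard ≤ 2 * b * (b - 1) := by
    calc S.ncard ≤ (↑(T.image (fun p : ℕ × ℕ => p.1 + p.2)) : Set ℕ).ncard :=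
          Set.ncard_le_ncard hSsub (Finset.finite_toSet _)
      _ = (T.image (fun p : ℕ × ℕ => p.1 + p.2)).card := Set.ncard_coe_finset _
      _ ≤ T.card := Finset.card_image_le
      _ = 2 * b * (b - 1) := hTcard
  constructor
  · rw [hkcard, hab]
    exact hupper
  -- lower bound
  intro hk4
  rw [hkcard] at hk4
  rw [hkcard, hab]
  have hb2 : 2 ≤ b := by omega
  have hFne : F.Nonempty := Finset.card_pos.1 (by omega)
  set p : ℕ := F.min' hFne with hp
  have hpF : p ∈ F := F.min'_mem hFne
  have hpC : p ∈ CoP n M := (hmemF p).1 hpF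
  have hpmin : ∀ x ∈ F, p ≤ x := fun x hx => F.min'_le x hx
  have hpn : 0 < p ∧ p < n := ⟨hpC.1, hpC.2.1⟩
  set q : ℕ := n - p with hq
  have hqC : q ∈ CoP n M := cop_symm hpC
  have hqF : q ∈ F := (hmemF q).2 hqC
  have hqmax : ∀ x ∈ F, x ≤ q := by
    intro x hx
    have hxC := (hmemF x).1 hx
    have h1 : n - x ∈ F := (hmemF _).2 (cop_symm hxC)
    have h2 := hpmin _ h1
    have := hxC.2.1
    omega
  have hpq : p < q := by
    by_contra h
    -- then every element of F equals p, so F.card ≤ 1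
    have h1 : F.card ≤ 1 := by
      apply Finset.card_le_one.2
      intro x hx y hy
      have := hpmin x hx; have := hqmax x hx
      have := hpmin y hy; have := hqmax y hy
      omega
    omega
  have hpc : 2 * p ≠ n := by omega
  have hqc : 2 * q ≠ n := by omega
  have hpN : p ∈ N := (hmemN p).2 ⟨hpC, hpc⟩
  have hqN : q ∈ N := (hmemN q).2 ⟨hqC, hqc⟩
  set D : Finset ℕ := N \ {p, q} with hD
  have hDcard : D.card = 2 * b - 2 := by
    rw [hD, Finset.card_sdiff_of_subset]
    · rw [hNcard]
      have : ({p, q} : Finset ℕ).card = 2 := by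
        rw [Finset.card_insert_of_notMem (by simp [hpq.ne]), Finset.card_singleton]
      rw [this]
    · intro x hx
      simp only [Finset.mem_insert, Finset.mem_singleton] at hx
      rcases hx with rfl | rfl
      · exact hpN
      · exact hqN
  have hmemD : ∀ x ∈ D, x ∈ N ∧ x ≠ p ∧ x ≠ q := by
    intro x hx
    simp only [hD, Finset.mem_sdiff, Finset.mem_insert, Finset.mem_singleton] at hx
    tauto
  have hDbound : ∀ x ∈ D, p < x ∧ x < q := by
    intro x hx
    obtain ⟨hxN, hxp, hxq⟩ := hmemD x hx
    have hxF : x ∈ F := Finset.mem_of_mem_filter x hxN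
    have := hpmin x hxF
    have := hqmax x hxF
    omega
  -- the two image sets
  have hsubset : ↑(D.image (p + ·) ∪ D.image (q + ·)) ⊆ S := by
    intro s hs
    simp only [Finset.coe_union, Set.mem_union, Finset.coe_image, Set.mem_image,
      Finset.mem_coe] at hs
    rcases hs with ⟨x, hx, rfl⟩ | ⟨x, hx, rfl⟩
    · obtain ⟨hxN, hxp, hxq⟩ := hmemD x hx
      obtain ⟨hxC, hxc⟩ := (hmemN x).1 hxN
      obtain ⟨h1, h2⟩ := hDbound x hx
      exact ⟨p, hpC, x, hxC, by omega, by omega, hpc, hxc, rfl⟩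
    · obtain ⟨hxN, hxp, hxq⟩ := hmemD x hx
      obtain ⟨hxC, hxc⟩ := (hmemN x).1 hxN
      obtain ⟨h1, h2⟩ := hDbound x hx
      exact ⟨q, hqC, x, hxC, by omega, by omega, hqc, hxc, rfl⟩
  have hdisj2 : Disjoint (D.image (p + ·)) (D.image (q + ·)) := by
    rw [Finset.disjoint_left]
    intro s h1 h2
    simp only [Finset.mem_image] at h1 h2
    obtain ⟨x, hx, hx'⟩ := h1
    obtain ⟨y, hy, hy'⟩ := h2
    obtain ⟨hx1, hx2⟩ := hDbound x hx
    obtain ⟨hy1, hy2⟩ := hDbound y hy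
    omega
  have hcard1 : (D.image (p + ·)).card = D.card :=
    Finset.card_image_of_injective _ fun a c h => by omega
  have hcard2 : (D.image (q + ·)).card = D.card :=
    Finset.card_image_of_injective _ fun a c h => by omega
  have hlow : 4 * (b - 1) ≤ S.ncard := by
    calc 4 * (b - 1) = D.card + D.card := by rw [hDcard]; omega
      _ = (D.image (p + ·) ∪ D.image (q + ·)).card := by
          rw [Finset.card_union_of_disjoint hdisj2, hcard1, hcard2]
      _ = (↑(D.image (p + ·) ∪ D.image (q + ·)) : Set ℕ).ncard :=
          (Set.ncard_coe_finset _).symm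
      _ ≤ S.ncard := Set.ncard_le_ncard hsubset hSfin
  exact hlow
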